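/- Let Δ be a group and let A, B be subgroups of Δ with c(A,B) finite. Then there exists a positive integer C such that for every natural number n, the cardinality of the set {Δ' ≤ Δ : c(A,Δ') ≤ n} is at most the cardinality of the set {Δ' ≤ Δ : c(B,Δ') ≤ C · n}, and the cardinality of {Δ' ≤ Δ : c(B,Δ') ≤ n} is at most the cardinality of {Δ' ≤ Δ : c(A,Δ') ≤ C · n} (inequalities of cardinals). -/

import Mathlib

/-- The commensurability index of two subgroups `A`, `B` of a group `G`:
`c(A,B) = [A : A ⊓ B] * [B : A ⊓ B]`. Following Mathlib's convention for
`Subgroup.relindex`, a value of `0` means the index is infinite. -/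
noncomputable def commIndex {G : Type*} [Group G] (A B : Subgroup G) : ℕ :=
  (A ⊓ B).relIndex A * (A ⊓ B).relIndex B

lemma commIndex_eq {G : Type*} [Group G] (A B : Subgroup G) :
    commIndex A B = B.relIndex A * A.relIndex B := by
  unfold commIndex
  rw [Subgroup.inf_relIndex_left, Subgroup.inf_relIndex_right]

lemma commIndex_comm {G : Type*} [Group G] (A B : Subgroup G) :
    commIndex A B = commIndex B A := by
  rw [commIndex_eq, commIndex_eq, mul_comm]

lemma commIndex_triangle {G : Type*} [Group G] (A B D : Subgroup G)
    (hAB : commIndex A B ≠ 0) (hAD : commIndex A D ≠ 0) :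
    commIndex B D ≠ 0 ∧ commIndex B D ≤ commIndex A B * commIndex A D := by
  rw [commIndex_eq] at hAB hAD ⊢
  rw [commIndex_eq A B, commIndex_eq A D]
  have hBA := left_ne_zero_of_mul hAB
  have hAB := right_ne_zero_of_mul hAB
  have hDA := left_ne_zero_of_mul hAD
  have hAD := right_ne_zero_of_mul hAD
  -- D.relindex B bound
  have key1 := Subgroup.relIndex_inf_mul_relIndex D A B
  have hD' : D.relIndex (A ⊓ B) ≠ 0 :=
    mt (Subgroup.relIndex_eq_zero_of_le_right inf_le_left) hDA
  have hDAB : (D ⊓ A).relIndex B ≠ 0 := by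
    rw [← key1]; exact mul_ne_zero hD' hAB
  have h1 : D.relIndex B ≤ D.relIndex A * A.relIndex B := by
    calc D.relIndex B ≤ (D ⊓ A).relIndex B :=
          Subgroup.relIndex_le_of_le_left inf_le_left hDAB
      _ = D.relIndex (A ⊓ B) * A.relIndex B := key1.symm
      _ ≤ D.relIndex A * A.relIndex B :=
          Nat.mul_le_mul_right _ (Subgroup.relIndex_le_of_le_right inf_le_left hDA)
  -- B.relindex D bound
  have key2 := Subgroup.relIndex_inf_mul_relIndex B A D
  have hB' : B.relIndex (A ⊓ D) ≠ 0 :=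
    mt (Subgroup.relIndex_eq_zero_of_le_right inf_le_left) hBA
  have hBAD : (B ⊓ A).relIndex D ≠ 0 := by
    rw [← key2]; exact mul_ne_zero hB' hAD
  have h2 : B.relIndex D ≤ B.relIndex A * A.relIndex D := by
    calc B.relIndex D ≤ (B ⊓ A).relIndex D :=
          Subgroup.relIndex_le_of_le_left inf_le_left hBAD
      _ = B.relIndex (A ⊓ D) * A.relIndex D := key2.symm
      _ ≤ B.relIndex A * A.relIndex D :=
          Nat.mul_le_mul_right _ (Subgroup.relIndex_le_of_le_right inf_le_left hBA)
  constructor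
  · exact mul_ne_zero (Subgroup.relIndex_ne_zero_trans hDA hAB)
      (Subgroup.relIndex_ne_zero_trans hBA hAD)
  · calc D.relIndex B * B.relIndex D
        ≤ (D.relIndex A * A.relIndex B) * (B.relIndex A * A.relIndex D) :=
          Nat.mul_le_mul h1 h2
      _ = B.relIndex A * A.relIndex B * (D.relIndex A * A.relIndex D) := by ring

/-- If `A`, `B` are commensurable subgroups of `Δ`, then there is a positive
integer `C` such that for every `n` the number of subgroups `Δ'` of `Δ` with
`c(A,Δ') ≤ n` is at most the number with `c(B,Δ') ≤ C * n`, and vice versa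
(inequalities of cardinals). -/
theorem commIndex_growth_equiv {Δ : Type*} [Group Δ] (A B : Subgroup Δ)
    (hAB : commIndex A B ≠ 0) :
    ∃ C : ℕ, 0 < C ∧ ∀ n : ℕ,
      Cardinal.mk {Δ' : Subgroup Δ | commIndex A Δ' ≠ 0 ∧ commIndex A Δ' ≤ n} ≤
        Cardinal.mk
          {Δ' : Subgroup Δ | commIndex B Δ' ≠ 0 ∧ commIndex B Δ' ≤ C * n} ∧
      Cardinal.mk {Δ' : Subgroup Δ | commIndex B Δ' ≠ 0 ∧ commIndex B Δ' ≤ n} ≤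
        Cardinal.mk
          {Δ' : Subgroup Δ | commIndex A Δ' ≠ 0 ∧ commIndex A Δ' ≤ C * n} := by
  have hBA : commIndex B A ≠ 0 := by rwa [commIndex_comm]
  refine ⟨commIndex A B, Nat.pos_of_ne_zero hAB, fun n => ⟨?_, ?_⟩⟩
  · apply Cardinal.mk_le_mk_of_subset
    rintro D ⟨hD0, hDn⟩
    obtain ⟨h0, hle⟩ := commIndex_triangle A B D hAB hD0
    exact ⟨h0, hle.trans (Nat.mul_le_mul_left _ hDn)⟩
  · apply Cardinal.mk_le_mk_of_subset
    rintro D ⟨hD0, hDn⟩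
    obtain ⟨h0, hle⟩ := commIndex_triangle B A D hBA hD0
    refine ⟨h0, hle.trans ?_⟩
    rw [commIndex_comm B A]
    exact Nat.mul_le_mul_left _ hDn
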